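/- (Hanson–Wright control of the light part.) There is an absolute constant K_L such that the following holds. Fix any hash function h : [n] → [t] for which the event E_h holds (so max_{j∈[t]} Σ_{i ≥ s, h(i)=j} u_i ≤ W). Then for any unit vector y ∈ C(A) and any ℓ with 2 ≤ ℓ ≤ 1/W, with probability at least 1 − e^{−ℓ} over the random signs D, |‖ΦD y_{s:n}‖₂² − ‖y_{s:n}‖₂²| ≤ K_L·√(W·ℓ). -/

import Mathlib

open Matrix Finset Real

noncomputable section

/-- `±1` sign value of a Boolean. -/
def sgn (b : Bool) : ℝ := if b then 1 else -1

/-- The sparse embedding matrix `ΦD` determined by a hash function `h : [n] → [t]`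
and random signs `σ`. -/
def SE {n t : ℕ} (h : Fin n → Fin t) (σ : Fin n → Bool) :
    Matrix (Fin t) (Fin n) ℝ :=
  fun a j => (if h j = a then (1 : ℝ) else 0) * sgn (σ j)

/-- Squared Euclidean norm. -/
def sqnorm {ι : Type*} [Fintype ι] (y : ι → ℝ) : ℝ := ∑ i, y i ^ 2

/-- Leverage scores: squared Euclidean norms of the rows of `U`. -/
def lev {n r : ℕ} (U : Matrix (Fin n) (Fin r) ℝ) (i : Fin n) : ℝ := ∑ k, U i k ^ 2

/-- **Hanson–Wright control of the light part.** There is an absolute constant `K_L`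
such that: for any hash function `h` satisfying the event `E_h`, any unit vector
`y ∈ C(A)` and any `2 ≤ ℓ ≤ 1/W`, with probability at least `1 − e^{−ℓ}` over the
random signs, `|‖ΦD y_{s:n}‖₂² − ‖y_{s:n}‖₂²| ≤ K_L·√(W·ℓ)`. -/
def Sj {m t : ℕ} (h : Fin m → Fin t) (z : Fin m → ℝ) (j : Fin t) (σ : Fin m → Bool) : ℝ :=
  ∑ i, if h i = j then sgn (σ i) * z i else 0

def vj {m t : ℕ} (h : Fin m → Fin t) (z : Fin m → ℝ) (j : Fin t) : ℝ :=
  ∑ i, if h i = j then (z i)^2 else 0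

lemma vj_nonneg {m t : ℕ} (h : Fin m → Fin t) (z : Fin m → ℝ) (j : Fin t) :
    0 ≤ vj h z j := by
  apply Finset.sum_nonneg
  intro i _
  split
  · exact sq_nonneg _
  · exact le_refl 0

lemma coshlike (y : ℝ) : Real.exp y + Real.exp (-y) ≤ 2 * Real.exp (y^2/2) := by
  have := Real.cosh_le_exp_half_sq y
  rw [Real.cosh_eq] at this
  linarith

lemma exp_merge (u v : ℝ) : Real.exp u * (2 * Real.exp v) = 2 * Real.exp (u + v) := by
  rw [Real.exp_add]; ring

lemma exp_sq (u : ℝ) : (Real.exp u)^2 = Real.exp (2*u) := by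
  rw [sq, ← Real.exp_add, two_mul]

lemma sqrt_exp (u : ℝ) : Real.sqrt (Real.exp u) = Real.exp (u/2) := by
  rw [show Real.exp u = (Real.exp (u/2))^2 by rw [exp_sq]; congr 1; ring]
  exact Real.sqrt_sq (Real.exp_pos _).le

lemma ks_up' (θ a x R : ℝ) :
    Real.exp (θ * (sgn true * a + x)^2 + R) + Real.exp (θ * (sgn false * a + x)^2 + R)
      ≤ 2 * Real.exp (θ * a^2) * Real.exp (θ * (1 + 2*θ*a^2) * x^2 + R) := by
  have h1 : θ * (sgn true * a + x)^2 + R = (θ*a^2 + θ*x^2 + R) + (2*θ*a*x) := by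
    simp [sgn]; ring
  have h2 : θ * (sgn false * a + x)^2 + R = (θ*a^2 + θ*x^2 + R) + (-(2*θ*a*x)) := by
    simp [sgn]; ring
  rw [h1, h2, Real.exp_add, Real.exp_add (θ*a^2 + θ*x^2 + R), ← mul_add]
  calc Real.exp (θ*a^2+θ*x^2+R) * (Real.exp (2*θ*a*x) + Real.exp (-(2*θ*a*x)))
      ≤ Real.exp (θ*a^2+θ*x^2+R) * (2 * Real.exp ((2*θ*a*x)^2/2)) :=
        mul_le_mul_of_nonneg_left (coshlike _) (Real.exp_pos _).le
    _ = 2 * Real.exp ((θ*a^2+θ*x^2+R) + (2*θ*a*x)^2/2) := exp_merge _ _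
    _ = 2 * Real.exp (θ*a^2) * Real.exp (θ*(1+2*θ*a^2)*x^2 + R) := by
        conv_rhs => rw [mul_assoc, ← Real.exp_add]
        exact congrArg (fun w => 2 * Real.exp w) (by ring)

lemma ks_low' (θ a x R : ℝ) :
    Real.exp (-(θ * (sgn true * a + x)^2 + R)) + Real.exp (-(θ * (sgn false * a + x)^2 + R))
      ≤ 2 * Real.exp (-(θ * a^2)) * Real.exp (-(θ * (1 - 2*θ*a^2) * x^2 + R)) := by
  have h1 : -(θ * (sgn true * a + x)^2 + R) = (-(θ*a^2) - θ*x^2 - R) + (-(2*θ*a*x)) := by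
    simp [sgn]; ring
  have h2 : -(θ * (sgn false * a + x)^2 + R) = (-(θ*a^2) - θ*x^2 - R) + (2*θ*a*x) := by
    simp [sgn]; ring
  rw [h1, h2, Real.exp_add, Real.exp_add (-(θ*a^2) - θ*x^2 - R), ← mul_add]
  calc Real.exp (-(θ*a^2)-θ*x^2-R) * (Real.exp (-(2*θ*a*x)) + Real.exp (2*θ*a*x))
      ≤ Real.exp (-(θ*a^2)-θ*x^2-R) * (2 * Real.exp ((2*θ*a*x)^2/2)) := by
        have := coshlike (2*θ*a*x)
        apply mul_le_mul_of_nonneg_left _ (Real.exp_pos _).le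
        linarith
    _ = 2 * Real.exp ((-(θ*a^2)-θ*x^2-R) + (2*θ*a*x)^2/2) := exp_merge _ _
    _ = 2 * Real.exp (-(θ*a^2)) * Real.exp (-(θ*(1-2*θ*a^2)*x^2 + R)) := by
        conv_rhs => rw [mul_assoc, ← Real.exp_add]
        exact congrArg (fun w => 2 * Real.exp w) (by ring)

lemma step_up {θ α v' : ℝ} (hθ : 0 ≤ θ) (hα : 0 ≤ α) (hv : 0 ≤ v')
    (hc : 2*θ*(α+v') < 1) :
    Real.exp (θ*α) * (Real.sqrt (1 - 2*(θ*(1+2*θ*α))*v'))⁻¹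
      ≤ (Real.sqrt (1 - 2*θ*(α+v')))⁻¹ := by
  have hp : 0 ≤ 2*θ*α := by positivity
  have hq : 0 ≤ 2*θ*v' := by positivity
  have hep : Real.exp (2*θ*α) * (1-(2*θ*α)) ≤ 1 := by
    have h1 : 1 - 2*θ*α ≤ Real.exp (-(2*θ*α)) := by
      have := Real.add_one_le_exp (-(2*θ*α)); linarith
    calc Real.exp (2*θ*α) * (1-2*θ*α) ≤ Real.exp (2*θ*α) * Real.exp (-(2*θ*α)) :=
          mul_le_mul_of_nonneg_left h1 (Real.exp_pos _).le
      _ = 1 := by rw [← Real.exp_add]; simp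
  have hB : (0:ℝ) < 1 - 2*(θ*(1+2*θ*α))*v' := by nlinarith
  have hA : (0:ℝ) < 1 - 2*θ*(α+v') := by linarith
  have key : Real.exp (2*θ*α) * (1 - 2*θ*(α+v')) ≤ 1 - 2*(θ*(1+2*θ*α))*v' := by
    have h2 := Real.add_one_le_exp (2*θ*α)
    nlinarith [Real.exp_pos (2*θ*α)]
  have hsq : Real.sqrt (Real.exp (2*θ*α)) = Real.exp (θ*α) := by
    rw [sqrt_exp]; congr 1; ring
  have target : Real.exp (θ*α) * Real.sqrt (1 - 2*θ*(α+v'))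
      ≤ Real.sqrt (1 - 2*(θ*(1+2*θ*α))*v') := by
    have := Real.sqrt_le_sqrt key
    rwa [Real.sqrt_mul (Real.exp_pos _).le, hsq] at this
  have hsA : 0 < Real.sqrt (1 - 2*θ*(α+v')) := Real.sqrt_pos.2 hA
  have hsB : 0 < Real.sqrt (1 - 2*(θ*(1+2*θ*α))*v') := Real.sqrt_pos.2 hB
  rw [mul_inv_le_iff₀ hsB]
  calc Real.exp (θ*α) ≤ Real.sqrt (1 - 2*(θ*(1+2*θ*α))*v') / Real.sqrt (1 - 2*θ*(α+v')) :=
        (le_div_iff₀ hsA).2 target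
    _ = _ := by rw [div_eq_mul_inv, mul_comm]

lemma step_low {θ α v' : ℝ} (hθ : 0 ≤ θ) (hα : 0 ≤ α) (hv : 0 ≤ v')
    (hc : 2*θ*(α+v') ≤ 1) :
    Real.exp (-(θ*α)) * Real.exp (-((θ*(1-2*θ*α))*v') + 2*(θ*(1-2*θ*α))^2*v'^2)
      ≤ Real.exp (-(θ*(α+v')) + 2*θ^2*(α+v')^2) := by
  rw [← Real.exp_add]
  apply Real.exp_le_exp.2
  have h1 : 0 ≤ 2*θ*α := by positivity
  have h2 : 2*θ*α ≤ 1 := by nlinarith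
  nlinarith [sq_nonneg (θ*v'), mul_nonneg (mul_nonneg hθ hθ) (mul_nonneg hα hv),
    mul_nonneg (mul_nonneg (mul_nonneg hθ hθ) (mul_nonneg hθ hα)) (mul_nonneg hv hv),
    mul_nonneg (mul_nonneg (mul_nonneg (mul_nonneg hθ hθ) (mul_nonneg hθ hθ)) (mul_nonneg hα hα)) (mul_nonneg hv hv),
    sq_nonneg (θ*(α+v'))]

lemma step_up2 {x : ℝ} (h0 : 0 ≤ x) (h1 : x ≤ 1/2) :
    Real.exp (-(x/2)) * (Real.sqrt (1-x))⁻¹ ≤ Real.exp (x^2) := by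
  have h1x : (0:ℝ) < 1 - x := by linarith
  have hgood : 1 ≤ (1-x) * Real.exp (2*x^2+x) := by
    have hu : 0 ≤ (2*x^2+x)/2 := by positivity
    have he := Real.add_one_le_exp ((2*x^2+x)/2)
    have hesq : Real.exp ((2*x^2+x)/2) ^ 2 = Real.exp (2*x^2+x) := by
      rw [exp_sq]; congr 1; ring
    have h3 : (1 + (2*x^2+x)/2)^2 ≤ Real.exp (2*x^2+x) := by
      rw [← hesq]
      have : 0 ≤ 1 + (2*x^2+x)/2 := by positivity
      nlinarith [he]
    have hpoly : 1 ≤ (1-x)*(1 + (2*x^2+x)/2)^2 := by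
      nlinarith [sq_nonneg x, mul_nonneg h0 (sq_nonneg x), sq_nonneg (x*x),
        mul_nonneg (mul_nonneg h0 h0) h0, mul_nonneg (mul_nonneg (mul_nonneg h0 h0) h0) (mul_nonneg h0 h0)]
    have h5' := mul_le_mul_of_nonneg_left h3 h1x.le
    linarith [hpoly, h5']
  have hsqe : Real.sqrt (Real.exp (2*x^2+x)) = Real.exp (x^2+x/2) := by
    rw [sqrt_exp]; congr 1; ring
  have h4 : 1 ≤ Real.sqrt (1-x) * Real.exp (x^2+x/2) := by
    have := Real.sqrt_le_sqrt hgood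
    rwa [Real.sqrt_one, Real.sqrt_mul h1x.le, hsqe] at this
  have hs : 0 < Real.sqrt (1-x) := Real.sqrt_pos.2 h1x
  have h5 : (Real.sqrt (1-x))⁻¹ ≤ Real.exp (x^2+x/2) := by
    rw [inv_le_iff_one_le_mul₀' hs]
    linarith [h4]
  calc Real.exp (-(x/2)) * (Real.sqrt (1-x))⁻¹
      ≤ Real.exp (-(x/2)) * Real.exp (x^2+x/2) :=
        mul_le_mul_of_nonneg_left h5 (Real.exp_pos _).le
    _ = Real.exp (x^2) := by rw [← Real.exp_add]; congr 1; ring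

lemma step_up2' {θ v : ℝ} (hθ : 0 ≤ θ) (hv : 0 ≤ v) (hc : 2*θ*v ≤ 1/2) :
    (Real.sqrt (1 - 2*θ*v))⁻¹ * Real.exp (-(θ*v)) ≤ Real.exp (4*θ^2*v^2) := by
  have h := step_up2 (x := 2*θ*v) (by positivity) hc
  have e1 : -(θ*v) = -((2*θ*v)/2) := by ring
  have e2 : (2*θ*v)^2 = 4*θ^2*v^2 := by ring
  rw [e1, mul_comm]
  rw [← e2]
  exact h

lemma upperMGF : ∀ (m : ℕ) {t : ℕ} (h : Fin m → Fin t) (z : Fin m → ℝ) (θ : Fin t → ℝ),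
    (∀ j, 0 ≤ θ j) → (∀ j, 2 * θ j * vj h z j < 1) →
    ∑ σ : Fin m → Bool, Real.exp (∑ j, θ j * (Sj h z j σ)^2) ≤
      2^m * ∏ j, (Real.sqrt (1 - 2 * θ j * vj h z j))⁻¹ := by
  intro m
  induction m with
  | zero =>
    intro t h z θ hθ hc
    have hS : ∀ j σ, Sj h z j σ = 0 := by intro j σ; simp [Sj]
    have hv : ∀ j, vj h z j = 0 := by intro j; simp [vj]
    simp [hS, hv]
  | succ m ih =>
    intro t h z θ hθ hc
    classical
    set a := z 0 with ha
    set j₀ := h 0 with hj₀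
    set z' : Fin m → ℝ := z ∘ Fin.succ with hz'
    set h' : Fin m → Fin t := h ∘ Fin.succ with hh'
    set θ' : Fin t → ℝ := Function.update θ j₀ (θ j₀ * (1 + 2 * θ j₀ * a^2)) with hθ'
    have hv_split : ∀ j, vj h z j = (if j₀ = j then a^2 else 0) + vj h' z' j := by
      intro j; unfold vj; rw [Fin.sum_univ_succ]; rfl
    have hS_split : ∀ j c τ, Sj h z j (Fin.cons c τ)
        = (if j₀ = j then sgn c * a else 0) + Sj h' z' j τ := by
      intro j c τ; unfold Sj; rw [Fin.sum_univ_succ]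
      simp only [Fin.cons_zero, Fin.cons_succ, hz', hh', Function.comp_apply, ← hj₀, ← ha]
    have hvj0 : vj h z j₀ = a^2 + vj h' z' j₀ := by rw [hv_split j₀, if_pos rfl]
    have hvne : ∀ j, j ≠ j₀ → vj h z j = vj h' z' j := by
      intro j hj; rw [hv_split j, if_neg (Ne.symm hj), zero_add]
    have hθ'0 : ∀ j, 0 ≤ θ' j := by
      intro j; rcases eq_or_ne j j₀ with rfl | hj
      · rw [hθ', Function.update_self]
        nlinarith [hθ j₀, sq_nonneg a, mul_nonneg (mul_nonneg (hθ j₀) (hθ j₀)) (sq_nonneg a)]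
      · rw [hθ', Function.update_of_ne hj]; exact hθ j
    have hc' : ∀ j, 2 * θ' j * vj h' z' j < 1 := by
      intro j; rcases eq_or_ne j j₀ with rfl | hj
      · rw [hθ', Function.update_self]
        have hcj := hc j₀
        rw [hvj0] at hcj
        have h1 := hθ j₀
        have h2 := vj_nonneg h' z' j₀
        have h3 := sq_nonneg a
        nlinarith [mul_nonneg h1 h3, mul_nonneg h1 h2,
          mul_nonneg (mul_nonneg h1 h3) (mul_nonneg h1 h2)]
      · rw [hθ', Function.update_of_ne hj, ← hvne j hj]; exact hc j
    have key : ∀ τ : Fin m → Bool,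
        ∑ c : Bool, Real.exp (∑ j, θ j * (Sj h z j (Fin.cons c τ))^2)
          ≤ 2 * Real.exp (θ j₀ * a^2) * Real.exp (∑ j, θ' j * (Sj h' z' j τ)^2) := by
      intro τ
      have hsplit : ∀ c, ∑ j, θ j * (Sj h z j (Fin.cons c τ))^2
          = θ j₀ * (sgn c * a + Sj h' z' j₀ τ)^2
            + ∑ j ∈ univ.erase j₀, θ j * (Sj h' z' j τ)^2 := by
        intro c
        rw [← Finset.add_sum_erase univ _ (mem_univ j₀)]
        congr 1
        · rw [hS_split j₀ c τ, if_pos rfl]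
        · apply Finset.sum_congr rfl
          intro j hj
          rw [hS_split j c τ, if_neg (Ne.symm (mem_erase.1 hj).1), zero_add]
      have hsplit' : ∑ j, θ' j * (Sj h' z' j τ)^2
          = θ j₀ * (1 + 2*θ j₀*a^2) * (Sj h' z' j₀ τ)^2
            + ∑ j ∈ univ.erase j₀, θ j * (Sj h' z' j τ)^2 := by
        rw [← Finset.add_sum_erase univ _ (mem_univ j₀)]
        congr 1
        · rw [hθ', Function.update_self]
        · apply Finset.sum_congr rfl
          intro j hj
          rw [hθ', Function.update_of_ne (mem_erase.1 hj).1]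
      rw [Fintype.sum_bool, hsplit true, hsplit false, hsplit']
      exact ks_up' (θ j₀) a (Sj h' z' j₀ τ) _
    calc ∑ σ : Fin (m+1) → Bool, Real.exp (∑ j, θ j * (Sj h z j σ)^2)
        = ∑ p : Bool × (Fin m → Bool),
            Real.exp (∑ j, θ j * (Sj h z j (Fin.cons p.1 p.2))^2) := by
          rw [← Equiv.sum_comp (Fin.consEquiv (fun _ : Fin (m+1) => Bool))
            (fun σ => Real.exp (∑ j, θ j * (Sj h z j σ)^2))]
          apply Finset.sum_congr rfl
          intro p _
          congr 1
      _ = ∑ τ : Fin m → Bool, ∑ c : Bool,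
            Real.exp (∑ j, θ j * (Sj h z j (Fin.cons c τ))^2) := by
          rw [Fintype.sum_prod_type]
          rw [Finset.sum_comm]
      _ ≤ ∑ τ : Fin m → Bool,
            2 * Real.exp (θ j₀ * a^2) * Real.exp (∑ j, θ' j * (Sj h' z' j τ)^2) :=
          Finset.sum_le_sum (fun τ _ => key τ)
      _ = 2 * Real.exp (θ j₀ * a^2)
            * ∑ τ : Fin m → Bool, Real.exp (∑ j, θ' j * (Sj h' z' j τ)^2) := by
          rw [Finset.mul_sum]
      _ ≤ 2 * Real.exp (θ j₀ * a^2)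
            * (2^m * ∏ j, (Real.sqrt (1 - 2 * θ' j * vj h' z' j))⁻¹) := by
          apply mul_le_mul_of_nonneg_left (ih h' z' θ' hθ'0 hc') (by positivity)
      _ ≤ 2^(m+1) * ∏ j, (Real.sqrt (1 - 2 * θ j * vj h z j))⁻¹ := by
          have hprodle : Real.exp (θ j₀ * a^2) * ∏ j, (Real.sqrt (1 - 2 * θ' j * vj h' z' j))⁻¹
              ≤ ∏ j, (Real.sqrt (1 - 2 * θ j * vj h z j))⁻¹ := by
            rw [← Finset.mul_prod_erase univ _ (mem_univ j₀),
                ← Finset.mul_prod_erase univ (fun j => (Real.sqrt (1 - 2 * θ j * vj h z j))⁻¹) (mem_univ j₀)]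
            have hsame : ∀ j ∈ univ.erase j₀,
                (Real.sqrt (1 - 2 * θ' j * vj h' z' j))⁻¹
                  = (Real.sqrt (1 - 2 * θ j * vj h z j))⁻¹ := by
              intro j hj
              rw [hθ', Function.update_of_ne (mem_erase.1 hj).1, ← hvne j (mem_erase.1 hj).1]
            rw [Finset.prod_congr rfl hsame]
            rw [← mul_assoc]
            apply mul_le_mul_of_nonneg_right _ (Finset.prod_nonneg (fun j _ => by positivity))
            have := step_up (hθ j₀) (sq_nonneg a) (vj_nonneg h' z' j₀)
              (by rw [← hvj0]; exact hc j₀)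
            rw [hθ', Function.update_self, hvj0]
            calc Real.exp (θ j₀ * a^2) * (Real.sqrt (1 - 2 * (θ j₀ * (1 + 2 * θ j₀ * a ^ 2)) * vj h' z' j₀))⁻¹
                ≤ (Real.sqrt (1 - 2 * θ j₀ * (a^2 + vj h' z' j₀)))⁻¹ := this
              _ = (Real.sqrt (1 - 2 * θ j₀ * (a ^ 2 + vj h' z' j₀)))⁻¹ := by norm_num
          calc 2 * Real.exp (θ j₀ * a^2) * (2^m * ∏ j, (Real.sqrt (1 - 2 * θ' j * vj h' z' j))⁻¹)
              = 2^(m+1) * (Real.exp (θ j₀ * a^2) * ∏ j, (Real.sqrt (1 - 2 * θ' j * vj h' z' j))⁻¹) := by ring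
            _ ≤ 2^(m+1) * ∏ j, (Real.sqrt (1 - 2 * θ j * vj h z j))⁻¹ := by
                apply mul_le_mul_of_nonneg_left hprodle (by positivity)

lemma lowerMGF : ∀ (m : ℕ) {t : ℕ} (h : Fin m → Fin t) (z : Fin m → ℝ) (θ : Fin t → ℝ),
    (∀ j, 0 ≤ θ j) → (∀ j, 2 * θ j * vj h z j ≤ 1) →
    ∑ σ : Fin m → Bool, Real.exp (-(∑ j, θ j * (Sj h z j σ)^2)) ≤
      2^m * ∏ j, Real.exp (-(θ j * vj h z j) + 2*(θ j)^2*(vj h z j)^2) := by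
  intro m
  induction m with
  | zero =>
    intro t h z θ hθ hc
    have hS : ∀ j σ, Sj h z j σ = 0 := by intro j σ; simp [Sj]
    have hv : ∀ j, vj h z j = 0 := by intro j; simp [vj]
    simp [hS, hv]
  | succ m ih =>
    intro t h z θ hθ hc
    classical
    set a := z 0 with ha
    set j₀ := h 0 with hj₀
    set z' : Fin m → ℝ := z ∘ Fin.succ with hz'
    set h' : Fin m → Fin t := h ∘ Fin.succ with hh'
    set θ' : Fin t → ℝ := Function.update θ j₀ (θ j₀ * (1 - 2 * θ j₀ * a^2)) with hθ'
    have hv_split : ∀ j, vj h z j = (if j₀ = j then a^2 else 0) + vj h' z' j := by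
      intro j; unfold vj; rw [Fin.sum_univ_succ]; rfl
    have hS_split : ∀ j c τ, Sj h z j (Fin.cons c τ)
        = (if j₀ = j then sgn c * a else 0) + Sj h' z' j τ := by
      intro j c τ; unfold Sj; rw [Fin.sum_univ_succ]
      simp only [Fin.cons_zero, Fin.cons_succ, hz', hh', Function.comp_apply, ← hj₀, ← ha]
    have hvj0 : vj h z j₀ = a^2 + vj h' z' j₀ := by rw [hv_split j₀, if_pos rfl]
    have hvne : ∀ j, j ≠ j₀ → vj h z j = vj h' z' j := by
      intro j hj; rw [hv_split j, if_neg (Ne.symm hj), zero_add]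
    have h2θa : 2 * θ j₀ * a^2 ≤ 1 := by
      have hcj := hc j₀
      rw [hvj0] at hcj
      nlinarith [mul_nonneg (hθ j₀) (vj_nonneg h' z' j₀)]
    have hθ'0 : ∀ j, 0 ≤ θ' j := by
      intro j; rcases eq_or_ne j j₀ with rfl | hj
      · rw [hθ', Function.update_self]
        nlinarith [hθ j₀, sq_nonneg a, mul_nonneg (hθ j₀) (sq_nonneg a)]
      · rw [hθ', Function.update_of_ne hj]; exact hθ j
    have hc' : ∀ j, 2 * θ' j * vj h' z' j ≤ 1 := by
      intro j; rcases eq_or_ne j j₀ with rfl | hj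
      · rw [hθ', Function.update_self]
        have hcj := hc j₀
        rw [hvj0] at hcj
        nlinarith [mul_nonneg (hθ j₀) (sq_nonneg a), vj_nonneg h' z' j₀,
          mul_nonneg (mul_nonneg (mul_nonneg (hθ j₀) (hθ j₀)) (sq_nonneg a)) (vj_nonneg h' z' j₀)]
      · rw [hθ', Function.update_of_ne hj, ← hvne j hj]; exact hc j
    have key : ∀ τ : Fin m → Bool,
        ∑ c : Bool, Real.exp (-(∑ j, θ j * (Sj h z j (Fin.cons c τ))^2))
          ≤ 2 * Real.exp (-(θ j₀ * a^2)) * Real.exp (-(∑ j, θ' j * (Sj h' z' j τ)^2)) := by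
      intro τ
      have hsplit : ∀ c, ∑ j, θ j * (Sj h z j (Fin.cons c τ))^2
          = θ j₀ * (sgn c * a + Sj h' z' j₀ τ)^2
            + ∑ j ∈ univ.erase j₀, θ j * (Sj h' z' j τ)^2 := by
        intro c
        rw [← Finset.add_sum_erase univ _ (mem_univ j₀)]
        congr 1
        · rw [hS_split j₀ c τ, if_pos rfl]
        · apply Finset.sum_congr rfl
          intro j hj
          rw [hS_split j c τ, if_neg (Ne.symm (mem_erase.1 hj).1), zero_add]
      have hsplit' : ∑ j, θ' j * (Sj h' z' j τ)^2
          = θ j₀ * (1 - 2*θ j₀*a^2) * (Sj h' z' j₀ τ)^2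
            + ∑ j ∈ univ.erase j₀, θ j * (Sj h' z' j τ)^2 := by
        rw [← Finset.add_sum_erase univ _ (mem_univ j₀)]
        congr 1
        · rw [hθ', Function.update_self]
        · apply Finset.sum_congr rfl
          intro j hj
          rw [hθ', Function.update_of_ne (mem_erase.1 hj).1]
      rw [Fintype.sum_bool, hsplit true, hsplit false, hsplit']
      exact ks_low' (θ j₀) a (Sj h' z' j₀ τ) _
    calc ∑ σ : Fin (m+1) → Bool, Real.exp (-(∑ j, θ j * (Sj h z j σ)^2))
        = ∑ p : Bool × (Fin m → Bool),
            Real.exp (-(∑ j, θ j * (Sj h z j (Fin.cons p.1 p.2))^2)) := by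
          rw [← Equiv.sum_comp (Fin.consEquiv (fun _ : Fin (m+1) => Bool))
            (fun σ => Real.exp (-(∑ j, θ j * (Sj h z j σ)^2)))]
          apply Finset.sum_congr rfl
          intro p _
          congr 1
      _ = ∑ τ : Fin m → Bool, ∑ c : Bool,
            Real.exp (-(∑ j, θ j * (Sj h z j (Fin.cons c τ))^2)) := by
          rw [Fintype.sum_prod_type]
          rw [Finset.sum_comm]
      _ ≤ ∑ τ : Fin m → Bool,
            2 * Real.exp (-(θ j₀ * a^2)) * Real.exp (-(∑ j, θ' j * (Sj h' z' j τ)^2)) :=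
          Finset.sum_le_sum (fun τ _ => key τ)
      _ = 2 * Real.exp (-(θ j₀ * a^2))
            * ∑ τ : Fin m → Bool, Real.exp (-(∑ j, θ' j * (Sj h' z' j τ)^2)) := by
          rw [Finset.mul_sum]
      _ ≤ 2 * Real.exp (-(θ j₀ * a^2))
            * (2^m * ∏ j, Real.exp (-(θ' j * vj h' z' j) + 2*(θ' j)^2*(vj h' z' j)^2)) := by
          apply mul_le_mul_of_nonneg_left (ih h' z' θ' hθ'0 hc') (by positivity)
      _ ≤ 2^(m+1) * ∏ j, Real.exp (-(θ j * vj h z j) + 2*(θ j)^2*(vj h z j)^2) := by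
          have hprodle : Real.exp (-(θ j₀ * a^2))
              * ∏ j, Real.exp (-(θ' j * vj h' z' j) + 2*(θ' j)^2*(vj h' z' j)^2)
              ≤ ∏ j, Real.exp (-(θ j * vj h z j) + 2*(θ j)^2*(vj h z j)^2) := by
            rw [← Finset.mul_prod_erase univ _ (mem_univ j₀),
                ← Finset.mul_prod_erase univ
                  (fun j => Real.exp (-(θ j * vj h z j) + 2*(θ j)^2*(vj h z j)^2)) (mem_univ j₀)]
            have hsame : ∀ j ∈ univ.erase j₀,
                Real.exp (-(θ' j * vj h' z' j) + 2*(θ' j)^2*(vj h' z' j)^2)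
                  = Real.exp (-(θ j * vj h z j) + 2*(θ j)^2*(vj h z j)^2) := by
              intro j hj
              rw [hθ', Function.update_of_ne (mem_erase.1 hj).1, ← hvne j (mem_erase.1 hj).1]
            rw [Finset.prod_congr rfl hsame]
            rw [← mul_assoc]
            apply mul_le_mul_of_nonneg_right _ (Finset.prod_nonneg (fun j _ => by positivity))
            have := step_low (hθ j₀) (sq_nonneg a) (vj_nonneg h' z' j₀)
              (by rw [← hvj0]; exact hc j₀)
            rw [hθ', Function.update_self, hvj0]
            exact this
          calc 2 * Real.exp (-(θ j₀ * a^2))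
              * (2^m * ∏ j, Real.exp (-(θ' j * vj h' z' j) + 2*(θ' j)^2*(vj h' z' j)^2))
              = 2^(m+1) * (Real.exp (-(θ j₀ * a^2))
                * ∏ j, Real.exp (-(θ' j * vj h' z' j) + 2*(θ' j)^2*(vj h' z' j)^2)) := by ring
            _ ≤ 2^(m+1) * ∏ j, Real.exp (-(θ j * vj h z j) + 2*(θ j)^2*(vj h z j)^2) := by
                apply mul_le_mul_of_nonneg_left hprodle (by positivity)

set_option maxHeartbeats 2000000 in
theorem hanson_wright_light_part :
    ∃ KL : ℝ, 0 < KL ∧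
    ∀ (n d r t : ℕ) (A : Matrix (Fin n) (Fin d) ℝ) (U : Matrix (Fin n) (Fin r) ℝ),
      A.rank = r → Uᵀ * U = 1 →
      (∀ y : Fin n → ℝ, y ∈ Set.range A.mulVec ↔ y ∈ Set.range U.mulVec) →
      (∀ i j : Fin n, i ≤ j → lev U j ≤ lev U i) →
    ∀ (δh T : ℝ), 0 < δh → 0 < T →
    ∀ s : ℕ,
      (∀ i : Fin n, (i : ℕ) < s → T < lev U i) →
      (∀ i : Fin n, s ≤ (i : ℕ) → lev U i ≤ T) →
    ∀ W : ℝ, W = T * Real.log (t / δh) + r / t →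
    ∀ h : Fin n → Fin t,
      (∀ j : Fin t,
        (∑ i : Fin n,
          Set.indicator {i : Fin n | s ≤ (i : ℕ) ∧ h i = j} (lev U) i) ≤ W) →
    ∀ y : Fin n → ℝ, y ∈ Set.range A.mulVec → sqnorm y = 1 →
    ∀ ℓ : ℝ, 2 ≤ ℓ → ℓ ≤ 1 / W →
    (1 - Real.exp (-ℓ)) * (Fintype.card (Fin n → Bool)) ≤
      Nat.card {σ : Fin n → Bool //
        |sqnorm ((SE h σ).mulVec (Set.indicator {i : Fin n | s ≤ (i : ℕ)} y)) -
            sqnorm (Set.indicator {i : Fin n | s ≤ (i : ℕ)} y)| ≤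
          KL * Real.sqrt (W * ℓ)} := by
  classical
  refine ⟨9, by norm_num, ?_⟩
  intro n d r t A U hrank hUU hiff hmono δh T hδ hT s hs1 hs2 W hW h hEh y hy hsq ℓ hℓ2 hℓW
  set z : Fin n → ℝ := Set.indicator {i : Fin n | s ≤ (i : ℕ)} y with hzdef
  -- basic positivity facts
  have hW0 : 0 < W := by
    by_contra hneg
    push_neg at hneg
    have : 1 / W ≤ 0 := one_div_nonpos.2 hneg
    linarith
  have hl0 : (0:ℝ) < ℓ := by linarith
  have hWl1 : W * ℓ ≤ 1 := by
    have h1 : ℓ * W ≤ 1 := (le_div_iff₀ hW0).1 hℓW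
    nlinarith
  have hlev0 : ∀ i, 0 ≤ lev U i := fun i => Finset.sum_nonneg (fun k _ => sq_nonneg _)
  -- representation y = U c with unit c
  obtain ⟨c, hc⟩ := (hiff y).1 hy
  have hdot : sqnorm y = ∑ k, (c k)^2 := by
    rw [← hc]
    have h1 : sqnorm (U.mulVec c) = (U.mulVec c) ⬝ᵥ (U.mulVec c) := by
      simp [sqnorm, dotProduct, sq]
    rw [h1, Matrix.dotProduct_mulVec, ← Matrix.mulVec_transpose, Matrix.mulVec_mulVec, hUU,
      Matrix.one_mulVec]
    simp [dotProduct, sq]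
  have hc1 : ∑ k, (c k)^2 = 1 := by rw [← hdot]; exact hsq
  have hCS : ∀ i, (y i)^2 ≤ lev U i := by
    intro i
    rw [← hc]
    have h1 : U.mulVec c i = ∑ k, U i k * c k := by simp [Matrix.mulVec, dotProduct]
    rw [h1]
    calc (∑ k, U i k * c k)^2 ≤ (∑ k, (U i k)^2) * (∑ k, (c k)^2) :=
          Finset.sum_mul_sq_le_sq_mul_sq univ _ _
      _ = lev U i := by rw [hc1, mul_one]; rfl
  -- indicator facts
  have hzi : ∀ i, z i = if s ≤ (i:ℕ) then y i else 0 := by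
    intro i
    rw [hzdef, Set.indicator_apply]
    simp [Set.mem_setOf_eq]
  have hz2 : ∀ i, (z i)^2 ≤ (y i)^2 := by
    intro i
    rw [hzi i]
    split
    · exact le_refl _
    · simpa using sq_nonneg (y i)
  have hvW : ∀ j, vj h z j ≤ W := by
    intro j
    refine le_trans ?_ (hEh j)
    apply Finset.sum_le_sum
    intro i _
    by_cases h1 : h i = j
    · by_cases h2 : s ≤ (i:ℕ)
      · rw [if_pos h1]
        have hmem : i ∈ {i : Fin n | s ≤ (i : ℕ) ∧ h i = j} := ⟨h2, h1⟩
        rw [Set.indicator_of_mem hmem]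
        rw [hzi i, if_pos h2]
        exact hCS i
      · rw [if_pos h1, hzi i, if_neg h2]
        have : (0:ℝ)^2 = 0 := by norm_num
        rw [this]
        exact Set.indicator_nonneg (fun i _ => hlev0 i) i
    · rw [if_neg h1]
      exact Set.indicator_nonneg (fun i _ => hlev0 i) i
  have hsumv : ∑ j, vj h z j = sqnorm z := by
    unfold vj sqnorm
    rw [Finset.sum_comm]
    apply Finset.sum_congr rfl
    intro i _
    rw [Finset.sum_ite_eq univ (h i) (fun _ => (z i)^2), if_pos (mem_univ _)]
  have hzsum1 : sqnorm z ≤ 1 := by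
    rw [← hsq]
    exact Finset.sum_le_sum (fun i _ => hz2 i)
  -- choice of θ
  set θ : ℝ := Real.sqrt ℓ / (4 * Real.sqrt W) with hθdef
  have hsW : 0 < Real.sqrt W := Real.sqrt_pos.2 hW0
  have hsl : 0 < Real.sqrt ℓ := Real.sqrt_pos.2 hl0
  have hθ0 : 0 < θ := by positivity
  have hθsqW : 4 * θ^2 * W = ℓ/4 := by
    rw [hθdef, div_pow, mul_pow, Real.sq_sqrt hl0.le, Real.sq_sqrt hW0.le]
    field_simp
  have hthl : θ * (9 * Real.sqrt (W*ℓ)) = 9/4 * ℓ := by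
    rw [hθdef, Real.sqrt_mul hW0.le]
    have hll : Real.sqrt ℓ * Real.sqrt ℓ = ℓ := Real.mul_self_sqrt hl0.le
    field_simp
    linear_combination hll
  have h2θv : ∀ j, 2 * θ * vj h z j ≤ 1/2 := by
    intro j
    have h1 : 2*θ*vj h z j ≤ 2*θ*W := by
      apply mul_le_mul_of_nonneg_left (hvW j) (by positivity)
    have h2 : 2*θ*W = Real.sqrt (W*ℓ)/2 := by
      rw [hθdef, Real.sqrt_mul hW0.le]
      field_simp
      linear_combination (-4) * Real.mul_self_sqrt hW0.le
    have h3 : Real.sqrt (W*ℓ) ≤ 1 := by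
      rw [show (1:ℝ) = Real.sqrt 1 from Real.sqrt_one.symm]
      exact Real.sqrt_le_sqrt hWl1
    have h5 : 2*θ*W ≤ 1/2 := by rw [h2]; linarith [h3]
    exact le_trans h1 h5
  -- link SE to Sj
  have hSE : ∀ (σ : Fin n → Bool) (j : Fin t), (SE h σ).mulVec z j = Sj h z j σ := by
    intro σ j
    simp [SE, Sj, Matrix.mulVec, dotProduct, ite_mul, one_mul, zero_mul, mul_assoc]
  have hQ : ∀ σ, sqnorm ((SE h σ).mulVec z) = ∑ j, (Sj h z j σ)^2 := by
    intro σ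
    unfold sqnorm
    apply Finset.sum_congr rfl
    intro j _
    rw [hSE]
  have hQθ : ∀ σ : Fin n → Bool, θ * (sqnorm ((SE h σ).mulVec z) - sqnorm z)
      = (∑ j, θ * (Sj h z j σ)^2) - (∑ j, θ * vj h z j) := by
    intro σ
    rw [hQ σ, ← hsumv, ← Finset.mul_sum, ← Finset.mul_sum]
    ring
  -- sum of exponent bounds
  have hexpsum : ∑ j, 4*θ^2*(vj h z j)^2 ≤ ℓ/4 := by
    calc ∑ j, 4*θ^2*(vj h z j)^2 ≤ ∑ j, 4*θ^2*W*(vj h z j) := by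
          apply Finset.sum_le_sum
          intro j _
          have hm := mul_le_mul_of_nonneg_left (hvW j)
            (mul_nonneg (sq_nonneg θ) (vj_nonneg h z j))
          nlinarith [hm]
      _ = 4*θ^2*W*(∑ j, vj h z j) := by rw [Finset.mul_sum]
      _ ≤ 4*θ^2*W*1 := by
          apply mul_le_mul_of_nonneg_left (hsumv ▸ hzsum1) (by positivity)
      _ = ℓ/4 := by rw [mul_one, hθsqW]
  have hup : ∑ σ : Fin n → Bool, Real.exp (θ * (sqnorm ((SE h σ).mulVec z) - sqnorm z))
      ≤ 2^n * Real.exp (ℓ/4) := by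
    calc ∑ σ : Fin n → Bool, Real.exp (θ * (sqnorm ((SE h σ).mulVec z) - sqnorm z))
        = (∑ σ : Fin n → Bool, Real.exp (∑ j, θ * (Sj h z j σ)^2))
            * Real.exp (-(∑ j, θ * vj h z j)) := by
          rw [Finset.sum_mul]
          apply Finset.sum_congr rfl
          intro σ _
          rw [← Real.exp_add, hQθ σ]
          exact congrArg Real.exp (by ring)
      _ ≤ (2^n * ∏ j, (Real.sqrt (1 - 2 * θ * vj h z j))⁻¹)
            * Real.exp (-(∑ j, θ * vj h z j)) := by
          apply mul_le_mul_of_nonneg_right _ (Real.exp_pos _).le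
          exact upperMGF n h z (fun _ => θ) (fun _ => hθ0.le)
            (fun j => lt_of_le_of_lt (h2θv j) (by norm_num))
      _ = 2^n * ∏ j, ((Real.sqrt (1 - 2 * θ * vj h z j))⁻¹ * Real.exp (-(θ * vj h z j))) := by
          have he : Real.exp (-(∑ j, θ * vj h z j)) = ∏ j, Real.exp (-(θ * vj h z j)) := by
            rw [← Real.exp_sum]
            congr 1
            rw [← Finset.sum_neg_distrib]
          rw [he, Finset.prod_mul_distrib]
          ring
      _ ≤ 2^n * ∏ j, Real.exp (4*θ^2*(vj h z j)^2) := by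
          apply mul_le_mul_of_nonneg_left _ (by positivity)
          apply Finset.prod_le_prod
          · intro j _
            positivity
          · intro j _
            exact step_up2' hθ0.le (vj_nonneg h z j) (h2θv j)
      _ = 2^n * Real.exp (∑ j, 4*θ^2*(vj h z j)^2) := by rw [← Real.exp_sum]
      _ ≤ 2^n * Real.exp (ℓ/4) := by
          apply mul_le_mul_of_nonneg_left (Real.exp_le_exp.2 hexpsum) (by positivity)
  have hlow : ∑ σ : Fin n → Bool, Real.exp (-(θ * (sqnorm ((SE h σ).mulVec z) - sqnorm z)))
      ≤ 2^n * Real.exp (ℓ/4) := by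
    calc ∑ σ : Fin n → Bool, Real.exp (-(θ * (sqnorm ((SE h σ).mulVec z) - sqnorm z)))
        = (∑ σ : Fin n → Bool, Real.exp (-(∑ j, θ * (Sj h z j σ)^2)))
            * Real.exp (∑ j, θ * vj h z j) := by
          rw [Finset.sum_mul]
          apply Finset.sum_congr rfl
          intro σ _
          rw [← Real.exp_add, hQθ σ]
          exact congrArg Real.exp (by ring)
      _ ≤ (2^n * ∏ j, Real.exp (-(θ * vj h z j) + 2*θ^2*(vj h z j)^2))
            * Real.exp (∑ j, θ * vj h z j) := by
          apply mul_le_mul_of_nonneg_right _ (Real.exp_pos _).le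
          exact lowerMGF n h z (fun _ => θ) (fun _ => hθ0.le)
            (fun j => le_trans (h2θv j) (by norm_num))
      _ = 2^n * Real.exp ((∑ j, (-(θ * vj h z j) + 2*θ^2*(vj h z j)^2)) + ∑ j, θ * vj h z j) := by
          rw [← Real.exp_sum, mul_assoc, ← Real.exp_add]
      _ = 2^n * Real.exp (∑ j, 2*θ^2*(vj h z j)^2) := by
          congr 1
          rw [← Finset.sum_add_distrib]
          congr 1
          apply Finset.sum_congr rfl
          intro j _
          ring
      _ ≤ 2^n * Real.exp (ℓ/4) := by
          apply mul_le_mul_of_nonneg_left _ (by positivity)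
          apply Real.exp_le_exp.2
          refine le_trans ?_ hexpsum
          apply Finset.sum_le_sum
          intro j _
          nlinarith [sq_nonneg (θ * vj h z j)]
  -- Markov / counting
  set P : (Fin n → Bool) → Prop := fun σ =>
    |sqnorm ((SE h σ).mulVec z) - sqnorm z| ≤ 9 * Real.sqrt (W * ℓ) with hPdef
  set bad : Finset (Fin n → Bool) := univ.filter (fun σ => ¬ P σ) with hbaddef
  have hmark : ∀ σ ∈ bad, Real.exp (θ * (9 * Real.sqrt (W*ℓ)))
      ≤ Real.exp (θ * (sqnorm ((SE h σ).mulVec z) - sqnorm z))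
        + Real.exp (-(θ * (sqnorm ((SE h σ).mulVec z) - sqnorm z))) := by
    intro σ hσ
    have hlt : 9 * Real.sqrt (W*ℓ) < |sqnorm ((SE h σ).mulVec z) - sqnorm z| := by
      rw [hbaddef] at hσ
      simp only [Finset.mem_filter, Finset.mem_univ, true_and, hPdef] at hσ
      linarith [not_le.1 hσ]
    have h1 : θ * (9 * Real.sqrt (W*ℓ)) ≤ θ * |sqnorm ((SE h σ).mulVec z) - sqnorm z| :=
      mul_le_mul_of_nonneg_left hlt.le hθ0.le
    rcases abs_cases (sqnorm ((SE h σ).mulVec z) - sqnorm z) with ⟨he, _⟩ | ⟨he, _⟩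
    · calc Real.exp (θ * (9 * Real.sqrt (W*ℓ)))
          ≤ Real.exp (θ * |sqnorm ((SE h σ).mulVec z) - sqnorm z|) := Real.exp_le_exp.2 h1
        _ = Real.exp (θ * (sqnorm ((SE h σ).mulVec z) - sqnorm z)) := by rw [he]
        _ ≤ _ := le_add_of_nonneg_right (Real.exp_pos _).le
    · calc Real.exp (θ * (9 * Real.sqrt (W*ℓ)))
          ≤ Real.exp (θ * |sqnorm ((SE h σ).mulVec z) - sqnorm z|) := Real.exp_le_exp.2 h1
        _ = Real.exp (-(θ * (sqnorm ((SE h σ).mulVec z) - sqnorm z))) := by rw [he]; ring_nf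
        _ ≤ _ := le_add_of_nonneg_left (Real.exp_pos _).le
  have hcard : (bad.card : ℝ) * Real.exp (θ * (9 * Real.sqrt (W*ℓ)))
      ≤ 2^n * Real.exp (ℓ/4) + 2^n * Real.exp (ℓ/4) := by
    calc (bad.card : ℝ) * Real.exp (θ * (9 * Real.sqrt (W*ℓ)))
        = ∑ _σ ∈ bad, Real.exp (θ * (9 * Real.sqrt (W*ℓ))) := by
          rw [Finset.sum_const, nsmul_eq_mul]
      _ ≤ ∑ σ ∈ bad, (Real.exp (θ * (sqnorm ((SE h σ).mulVec z) - sqnorm z))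
            + Real.exp (-(θ * (sqnorm ((SE h σ).mulVec z) - sqnorm z)))) :=
          Finset.sum_le_sum hmark
      _ ≤ ∑ σ : Fin n → Bool, (Real.exp (θ * (sqnorm ((SE h σ).mulVec z) - sqnorm z))
            + Real.exp (-(θ * (sqnorm ((SE h σ).mulVec z) - sqnorm z)))) := by
          apply Finset.sum_le_sum_of_subset_of_nonneg (Finset.subset_univ _)
          intro σ _ _
          positivity
      _ = (∑ σ : Fin n → Bool, Real.exp (θ * (sqnorm ((SE h σ).mulVec z) - sqnorm z)))
            + ∑ σ : Fin n → Bool, Real.exp (-(θ * (sqnorm ((SE h σ).mulVec z) - sqnorm z))) :=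
          Finset.sum_add_distrib
      _ ≤ 2^n * Real.exp (ℓ/4) + 2^n * Real.exp (ℓ/4) := add_le_add hup hlow
  have hbadle : (bad.card : ℝ) ≤ 2^n * Real.exp (-ℓ) := by
    have hexp2 : Real.exp (-1) ≤ 1/2 := by
      rw [Real.exp_neg]
      have h2e : (2:ℝ) ≤ Real.exp 1 := by
        have := Real.add_one_le_exp 1
        linarith
      rw [inv_le_comm₀ (Real.exp_pos 1) (by norm_num)] at *
      · linarith
    have h2 : (bad.card : ℝ) ≤ (2^n * Real.exp (ℓ/4) + 2^n * Real.exp (ℓ/4))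
        / Real.exp (9/4*ℓ) := by
      rw [le_div_iff₀ (Real.exp_pos _), ← hthl]
      exact hcard
    have h3 : (2^n * Real.exp (ℓ/4) + 2^n * Real.exp (ℓ/4)) / Real.exp (9/4*ℓ)
        = 2^n * (2 * Real.exp (ℓ/4 - 9/4*ℓ)) := by
      rw [Real.exp_sub]
      ring
    have h4 : ℓ/4 - 9/4*ℓ = -ℓ + -ℓ := by ring
    have h5 : 2 * Real.exp (ℓ/4 - 9/4*ℓ) ≤ Real.exp (-ℓ) := by
      rw [h4, Real.exp_add]
      have hA : Real.exp (-ℓ) ≤ Real.exp (-1) := Real.exp_le_exp.2 (by linarith)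
      nlinarith [Real.exp_pos (-ℓ), hA, hexp2]
    calc (bad.card : ℝ) ≤ 2^n * (2 * Real.exp (ℓ/4 - 9/4*ℓ)) := by rw [← h3]; exact h2
      _ ≤ 2^n * Real.exp (-ℓ) := by
          apply mul_le_mul_of_nonneg_left h5 (by positivity)
  -- final count
  have hgoodcard : Nat.card {σ : Fin n → Bool // P σ} = (univ.filter P).card := by
    rw [Nat.card_eq_fintype_card]
    exact Fintype.card_subtype _
  have hsplitcard : (univ.filter P).card + bad.card = 2^n := by
    rw [hbaddef, Finset.card_filter_add_card_filter_not]
    simp [Finset.card_univ]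
  have hCfun : (Fintype.card (Fin n → Bool) : ℝ) = 2^n := by
    simp [Fintype.card_fun]
  show (1 - Real.exp (-ℓ)) * (Fintype.card (Fin n → Bool)) ≤
      Nat.card {σ : Fin n → Bool // P σ}
  rw [hgoodcard, hCfun]
  have hgr : ((univ.filter P).card : ℝ) = 2^n - (bad.card : ℝ) := by
    have := hsplitcard
    have hcast : ((univ.filter P).card : ℝ) + (bad.card : ℝ) = 2^n := by
      exact_mod_cast congrArg (Nat.cast : ℕ → ℝ) this
    linarith
  rw [hgr]
  have hexpneg : 0 ≤ Real.exp (-ℓ) := (Real.exp_pos _).le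
  nlinarith [hbadle]
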